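/- In the two-unit example where potential outcomes are Y_1(0,0)=Y_2(0,0)=0, Y_1(1,0)=Y_2(0,1)=1, Y_1(0,1)=Y_2(1,0)=2, Y_1(1,1)=Y_2(1,1)=3, and treatment is completely randomized with P(D=(1,0))=P(D=(0,1))=1/2, the population difference in means τ(1,0) = (1/2)Σ_i (E[Y_i | D_i=1] − E[Y_i | D_i=0]) equals −1, even though every unit-level treatment effect Y_i(1,d_{-i}) − Y_i(0,d_{-i}) equals +1 for all d_{-i} ∈ {0,1}. -/
import Mathlib
open Finset
open scoped Classical
noncomputable section
def prb {Ω : Type*} [Fintype Ω] (p : Ω → ℝ) (A : Ω → Prop) : ℝ :=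
  ∑ ω, if A ω then p ω else 0
def eiv {Ω : Type*} [Fintype Ω] (p : Ω → ℝ) (f : Ω → ℝ) (A : Ω → Prop) : ℝ :=
  ∑ ω, if A ω then p ω * f ω else 0
def expv {Ω : Type*} [Fintype Ω] (p : Ω → ℝ) (f : Ω → ℝ) : ℝ := ∑ ω, p ω * f ω
def cexp {Ω : Type*} [Fintype Ω] (p : Ω → ℝ) (f : Ω → ℝ) (A : Ω → Prop) : ℝ :=
  eiv p f A / prb p A
def cpr {Ω : Type*} [Fintype Ω] (p : Ω → ℝ) (A B : Ω → Prop) : ℝ :=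
  prb p (fun ω => A ω ∧ B ω) / prb p B
def bR : Bool → ℝ := fun x => if x then 1 else 0
def pCR : (Fin 2 → Bool) → ℝ := fun d =>
  if d = ![true, false] then 1/2 else if d = ![false, true] then 1/2 else 0
def Ydim : Fin 2 → (Fin 2 → Bool) → ℝ := fun i d =>
  if i = 0 then bR (d 0) + 2 * bR (d 1) else 2 * bR (d 0) + bR (d 1)

lemma sum_fin2bool (f : (Fin 2 → Bool) → ℝ) :
    ∑ ω, f ω = f ![false,false] + f ![false,true] + f ![true,false] + f ![true,true] := by
  have h : ∀ a b : Bool, (piFinTwoEquiv (fun _ => Bool)).symm (a, b) = ![a, b] := by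
    intro a b; funext i; fin_cases i <;> simp [piFinTwoEquiv]
  rw [← (piFinTwoEquiv (fun _ => Bool)).symm.sum_comp f]
  simp only [Fintype.sum_prod_type, Fintype.sum_bool, h]
  ring

theorem stmt0 :
    (∀ i : Fin 2, ∀ dm : Bool,
      Ydim i (Function.update (fun _ => dm) i true) -
        Ydim i (Function.update (fun _ => dm) i false) = 1) ∧
    (1 / 2 : ℝ) *
      ((cexp pCR (Ydim 0) (fun d => d 0 = true) - cexp pCR (Ydim 0) (fun d => d 0 = false)) +
       (cexp pCR (Ydim 1) (fun d => d 1 = true) - cexp pCR (Ydim 1) (fun d => d 1 = false)))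
      = -1 := by
  constructor
  · intro i dm
    fin_cases i <;> cases dm <;> simp [Ydim, bR, Function.update]
  · simp only [cexp, eiv, prb, sum_fin2bool]
    have e1 : (![true,true] : Fin 2 → Bool) ≠ ![true,false] := by decide
    have e2 : (![true,true] : Fin 2 → Bool) ≠ ![false,true] := by decide
    have e3 : (![false,false] : Fin 2 → Bool) ≠ ![true,false] := by decide
    have e4 : (![false,false] : Fin 2 → Bool) ≠ ![false,true] := by decide
    norm_num [pCR, Ydim, bR, e1, e2, e3, e4]
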